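/- For the shift σ on 𝒳 = [0,1]^ℤ with metric d(x,y) = Σ_{m∈ℤ} 2^{-|m|}|x_m - y_m|, one has for every ε ∈ (0,1) and n ≥ 1: (1 + ⌊1/ε⌋)^n ≤ #(𝒳, d_n, ε) ≤ (1 + ⌊12/ε⌋)^{n + 2⌈log₂(4/ε)⌉ + 1}, where d_n(x,y) = max_{0≤k<n} d(σ^k x, σ^k y). Consequently, the metric mean dimension mdim_M([0,1]^ℤ, σ, d) = lim_{ε→0} S(𝒳,σ,d,ε)/|log ε| equals 1. -/

import Mathlib

open Real Filter Set Topology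
open scoped NNReal

/-- Minimal cardinality of a cover of `𝒳` by open sets of `ρ`-diameter less than `ε`. -/
noncomputable def coverNum (𝒳 : Type*) [TopologicalSpace 𝒳] (ρ : 𝒳 → 𝒳 → ℝ) (ε : ℝ) : ℕ :=
  sInf {N : ℕ | ∃ U : Fin N → Set 𝒳, (∀ i, IsOpen (U i)) ∧ (∀ x, ∃ i, x ∈ U i) ∧
    ∀ i, ∀ x ∈ U i, ∀ y ∈ U i, ρ x y < ε}

/-- The infinite-dimensional cube `[0,1]^ℤ`. -/
abbrev Cube : Type := ℤ → Set.Icc (0 : ℝ) 1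

/-- The metric `d(x,y) = Σ_{m ∈ ℤ} 2^{-|m|} |x_m - y_m|` on `[0,1]^ℤ`. -/
noncomputable def dCube (x y : Cube) : ℝ :=
  ∑' m : ℤ, (2 : ℝ) ^ (-|m|) * |(x m : ℝ) - (y m : ℝ)|

/-- The shift map on `[0,1]^ℤ`. -/
def shiftCube (x : Cube) : Cube := fun m => x (m + 1)

/-- `d_n(x,y) = max_{0 ≤ k < n} d(σ^k x, σ^k y)` for the shift `σ` on `[0,1]^ℤ`. -/
noncomputable def dnCube (n : ℕ) (x y : Cube) : ℝ :=
  (((Finset.range n).sup fun k =>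
    Real.toNNReal (dCube (shiftCube^[k] x) (shiftCube^[k] y))) : ℝ≥0)


set_option maxHeartbeats 1000000

-- kernel
lemma kernel_nonneg (m : ℤ) : (0:ℝ) ≤ (2 : ℝ) ^ (-|m|) := by positivity

lemma kernel_nat (n : ℕ) : (2 : ℝ) ^ (-|(n:ℤ)|) = (1/2:ℝ)^n := by
  rw [Int.abs_natCast, one_div, inv_pow, ← zpow_natCast (2:ℝ), ← zpow_neg]

lemma summable_kernel : Summable (fun m : ℤ => (2:ℝ) ^ (-|m|)) := by
  apply Summable.of_nat_of_neg_add_one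
  · simpa [kernel_nat] using summable_geometric_two
  · have : ∀ n : ℕ, (2:ℝ) ^ (-|(-(n+1):ℤ)|) = (1/2) * (1/2)^n := by
      intro n
      have : |(-(n+1):ℤ)| = (n:ℤ) + 1 := by
        rw [abs_neg]; exact abs_of_nonneg (by positivity)
      rw [this]
      rw [neg_add, zpow_add₀ (two_ne_zero), one_div, inv_pow, ← zpow_natCast (2:ℝ), ← zpow_neg]
      ring
    rw [funext this]
    exact (summable_geometric_two).mul_left _

lemma tsum_kernel : ∑' m : ℤ, (2:ℝ) ^ (-|m|) = 3 := by
  rw [tsum_of_nat_of_neg_add_one]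
  · have h1 : ∑' n : ℕ, (2:ℝ) ^ (-|(n:ℤ)|) = 2 := by
      simp only [kernel_nat]; exact tsum_geometric_two
    have h2 : ∑' n : ℕ, (2:ℝ) ^ (-|(-(n+1):ℤ)|) = 1 := by
      have e : ∀ n : ℕ, (2:ℝ) ^ (-|(-(n+1):ℤ)|) = (1/2) * (1/2)^n := by
        intro n
        have : |(-(n+1):ℤ)| = (n:ℤ) + 1 := by
          rw [abs_neg]; exact abs_of_nonneg (by positivity)
        rw [this, neg_add, zpow_add₀ (two_ne_zero), one_div, inv_pow, ← zpow_natCast (2:ℝ), ← zpow_neg]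
        ring
      rw [funext e, tsum_mul_left, tsum_geometric_two]
      norm_num
    rw [h1, h2]; norm_num
  · simpa [kernel_nat] using summable_geometric_two
  · have e : ∀ n : ℕ, (2:ℝ) ^ (-|(-(n+1):ℤ)|) = (1/2) * (1/2)^n := by
      intro n
      have : |(-(n+1):ℤ)| = (n:ℤ) + 1 := by
        rw [abs_neg]; exact abs_of_nonneg (by positivity)
      rw [this, neg_add, zpow_add₀ (two_ne_zero), one_div, inv_pow, ← zpow_natCast (2:ℝ), ← zpow_neg]
      ring
    rw [funext e]
    exact (summable_geometric_two).mul_left _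

lemma window_sum (M : ℕ) : ∑ m ∈ Finset.Icc (-(M:ℤ)) M, (2:ℝ) ^ (-|m|) = 3 - 2 * (2:ℝ)^(-(M:ℤ)) := by
  induction M with
  | zero => norm_num
  | succ M ih =>
    have h1 : Finset.Icc (-((M+1:ℕ):ℤ)) ((M+1:ℕ):ℤ)
        = insert (-((M:ℤ)+1)) (insert ((M:ℤ)+1) (Finset.Icc (-(M:ℤ)) M)) := by
      push_cast
      ext m
      simp only [Finset.mem_insert, Finset.mem_Icc]
      omega
    rw [h1, Finset.sum_insert, Finset.sum_insert, ih]
    · have e1 : |(-((M:ℤ)+1))| = (M:ℤ)+1 := by rw [abs_neg]; exact abs_of_nonneg (by positivity)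
      have e2 : |((M:ℤ)+1)| = (M:ℤ)+1 := abs_of_nonneg (by positivity)
      rw [e1, e2]
      have h2 : (2:ℝ) ^ (-((M:ℤ)+1)) = (2:ℝ)^(-(M:ℤ)) / 2 := by
        rw [neg_add, zpow_add₀ (two_ne_zero)]
        norm_num
        ring
      have h3 : (-((M+1:ℕ):ℤ)) = -((M:ℤ)+1) := by push_cast; ring
      rw [h3, h2]; ring
    · simp only [Finset.mem_Icc]; omega
    · simp only [Finset.mem_insert, Finset.mem_Icc]; omega

-- basic facts about dCube
lemma coord_diff_le_one (x y : Cube) (m : ℤ) : |(x m : ℝ) - (y m : ℝ)| ≤ 1 := by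
  have hx := (x m).2
  have hy := (y m).2
  simp only [Set.mem_Icc] at hx hy
  rw [abs_le]; constructor <;> linarith

lemma summand_nonneg (x y : Cube) (m : ℤ) : 0 ≤ (2:ℝ) ^ (-|m|) * |(x m : ℝ) - (y m : ℝ)| := by
  positivity

lemma summand_le_kernel (x y : Cube) (m : ℤ) :
    (2:ℝ) ^ (-|m|) * |(x m : ℝ) - (y m : ℝ)| ≤ (2:ℝ) ^ (-|m|) := by
  nth_rewrite 2 [← mul_one ((2:ℝ) ^ (-|m|))]
  exact mul_le_mul_of_nonneg_left (coord_diff_le_one x y m) (by positivity)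

lemma summable_dCube (x y : Cube) :
    Summable (fun m : ℤ => (2:ℝ) ^ (-|m|) * |(x m : ℝ) - (y m : ℝ)|) :=
  Summable.of_nonneg_of_le (summand_nonneg x y) (summand_le_kernel x y) summable_kernel

lemma dCube_nonneg (x y : Cube) : 0 ≤ dCube x y :=
  tsum_nonneg (summand_nonneg x y)

lemma coord_le_dCube (x y : Cube) (m : ℤ) :
    (2:ℝ) ^ (-|m|) * |(x m : ℝ) - (y m : ℝ)| ≤ dCube x y :=
  Summable.le_tsum (summable_dCube x y) m (fun b _ => summand_nonneg x y b)

lemma shift_iter (k : ℕ) (x : Cube) : shiftCube^[k] x = fun m => x (m + k) := by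
  induction k with
  | zero => simp
  | succ k ih =>
    rw [Function.iterate_succ_apply', ih]
    funext m
    show x (m + 1 + k) = x (m + (k+1))
    congr 1
    omega

lemma le_dnCube {n k : ℕ} (hk : k < n) (x y : Cube) :
    dCube (shiftCube^[k] x) (shiftCube^[k] y) ≤ dnCube n x y := by
  have h1 : (dCube (shiftCube^[k] x) (shiftCube^[k] y)).toNNReal
      ≤ (Finset.range n).sup fun j => (dCube (shiftCube^[j] x) (shiftCube^[j] y)).toNNReal :=
    Finset.le_sup (f := fun j => (dCube (shiftCube^[j] x) (shiftCube^[j] y)).toNNReal)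
      (Finset.mem_range.2 hk)
  calc dCube (shiftCube^[k] x) (shiftCube^[k] y)
      = ((dCube (shiftCube^[k] x) (shiftCube^[k] y)).toNNReal : ℝ) :=
        (Real.coe_toNNReal _ (dCube_nonneg _ _)).symm
    _ ≤ dnCube n x y := by exact_mod_cast h1

lemma dnCube_lt {n : ℕ} {x y : Cube} {ε : ℝ} (hε : 0 < ε)
    (h : ∀ k < n, dCube (shiftCube^[k] x) (shiftCube^[k] y) < ε) : dnCube n x y < ε := by
  have : ((Finset.range n).sup fun k => (dCube (shiftCube^[k] x) (shiftCube^[k] y)).toNNReal)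
      < ε.toNNReal := by
    rw [Finset.sup_lt_iff]
    · intro k hk
      rw [Real.toNNReal_lt_toNNReal_iff hε]
      exact h k (Finset.mem_range.1 hk)
    · simpa using hε
  have := (NNReal.coe_lt_coe.2 this)
  rwa [Real.coe_toNNReal _ hε.le] at this

-- the family of separated points for the lower bound
noncomputable def lowPt (ε : ℝ) (hε : 0 < ε) (hε1 : ε < 1) (n : ℕ)
    (f : Fin n → Fin (1 + ⌊1/ε⌋₊)) : Cube := fun m =>
  if h : 0 ≤ m ∧ m < n then
    ⟨(f ⟨m.toNat, by omega⟩ : ℕ) * ε, by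
      constructor
      · positivity
      · have hb : ((f ⟨m.toNat, by omega⟩ : ℕ) : ℝ) ≤ ⌊1/ε⌋₊ := by
          have := (f ⟨m.toNat, by omega⟩).2
          have : (f ⟨m.toNat, by omega⟩ : ℕ) ≤ ⌊1/ε⌋₊ := by omega
          exact_mod_cast this
        have hf : (⌊1/ε⌋₊ : ℝ) ≤ 1/ε := Nat.floor_le (by positivity)
        calc ((f ⟨m.toNat, by omega⟩ : ℕ) : ℝ) * ε ≤ (1/ε) * ε := by
              apply mul_le_mul_of_nonneg_right (hb.trans hf) hε.le
          _ = 1 := by field_simp⟩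
  else ⟨0, by norm_num⟩

lemma lowPt_sep (ε : ℝ) (hε : 0 < ε) (hε1 : ε < 1) (n : ℕ)
    (f g : Fin n → Fin (1 + ⌊1/ε⌋₊)) (hfg : f ≠ g) :
    ε ≤ dnCube n (lowPt ε hε hε1 n f) (lowPt ε hε hε1 n g) := by
  obtain ⟨j, hj⟩ : ∃ j, f j ≠ g j := Function.ne_iff.1 hfg
  have hjn : (j : ℕ) < n := j.2
  refine le_trans ?_ (le_dnCube hjn _ _)
  rw [shift_iter, shift_iter]
  have key := coord_le_dCube (fun m => (lowPt ε hε hε1 n f) (m + (j:ℕ)))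
    (fun m => (lowPt ε hε hε1 n g) (m + (j:ℕ))) 0
  beta_reduce at key
  refine le_trans ?_ key
  simp only [abs_zero, neg_zero, zpow_zero, one_mul, zero_add]
  have hcond : (0:ℤ) ≤ ((j:ℕ):ℤ) ∧ ((j:ℕ):ℤ) < n := by
    constructor
    · positivity
    · exact_mod_cast hjn
  have hval : ∀ h : Fin n → Fin (1 + ⌊1/ε⌋₊),
      ((lowPt ε hε hε1 n h) ((j:ℕ):ℤ) : ℝ) = (h j : ℕ) * ε := by
    intro h
    simp only [lowPt]
    rw [dif_pos hcond]
    have he : (⟨((j:ℕ):ℤ).toNat, by omega⟩ : Fin n) = j := by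
      ext; simp
    simp [he]
  rw [hval f, hval g, ← sub_mul, abs_mul, abs_of_pos hε]
  have h1 : (1:ℝ) ≤ |((f j : ℕ) : ℝ) - ((g j : ℕ) : ℝ)| := by
    have : ((f j : ℕ) : ℤ) ≠ ((g j : ℕ) : ℤ) := by
      intro h; apply hj; ext; exact_mod_cast h
    have h2 : (1:ℤ) ≤ |((f j : ℕ) : ℤ) - ((g j : ℕ) : ℤ)| :=
      Int.one_le_abs (sub_ne_zero.2 this)
    exact_mod_cast h2
  nth_rewrite 1 [← one_mul ε]
  exact mul_le_mul_of_nonneg_right h1 hε.le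

lemma coverNum_mem_lower (ε : ℝ) (hε : 0 < ε) (hε1 : ε < 1) (n : ℕ) (N : ℕ)
    (hN : N ∈ {N : ℕ | ∃ U : Fin N → Set Cube, (∀ i, IsOpen (U i)) ∧ (∀ x, ∃ i, x ∈ U i) ∧
      ∀ i, ∀ x ∈ U i, ∀ y ∈ U i, dnCube n x y < ε}) :
    (1 + ⌊1/ε⌋₊) ^ n ≤ N := by
  obtain ⟨U, hopen, hcov, hdiam⟩ := hN
  have hchoice : ∀ f : Fin n → Fin (1 + ⌊1/ε⌋₊), ∃ i, lowPt ε hε hε1 n f ∈ U i :=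
    fun f => hcov _
  choose φ hφ using hchoice
  have hinj : Function.Injective φ := by
    intro f g hfgi
    by_contra hfg
    have h1 := hdiam (φ f) _ (hφ f) _ (hfgi ▸ hφ g)
    have h2 := lowPt_sep ε hε hε1 n f g hfg
    linarith
  have := Fintype.card_le_of_injective φ hinj
  simpa [Fintype.card_fun] using this

lemma dCube_shift (x y : Cube) (k : ℕ) :
    dCube (shiftCube^[k] x) (shiftCube^[k] y)
      = ∑' m : ℤ, (2:ℝ) ^ (-|m|) * |(x (m+k) : ℝ) - (y (m+k) : ℝ)| := by
  rw [shift_iter, shift_iter]; rfl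

lemma tail_kernel (M : ℕ) :
    ∑' m : ↑((Finset.Icc (-(M:ℤ)) M : Finset ℤ) : Set ℤ)ᶜ, (2:ℝ) ^ (-|(m:ℤ)|)
      = 2 * (2:ℝ)^(-(M:ℤ)) := by
  have h := Summable.sum_add_tsum_compl (s := Finset.Icc (-(M:ℤ)) M) summable_kernel
  rw [tsum_kernel, window_sum] at h
  linarith

lemma cover_mem (ε : ℝ) (hε : 0 < ε) (hε1 : ε < 1) (n : ℕ) :
    (1 + ⌊12/ε⌋₊) ^ (n + 2 * ⌈Real.logb 2 (4/ε)⌉₊ + 1)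
      ∈ {N : ℕ | ∃ U : Fin N → Set Cube, (∀ i, IsOpen (U i)) ∧ (∀ x, ∃ i, x ∈ U i) ∧
        ∀ i, ∀ x ∈ U i, ∀ y ∈ U i, dnCube n x y < ε} := by
  set K := ⌊12/ε⌋₊ with hKdef
  set M := ⌈Real.logb 2 (4/ε)⌉₊ with hMdef
  set L := n + 2 * M + 1 with hLdef
  -- numeric facts
  have hK9 : (9:ℝ)/ε ≤ K := by
    have h1 : (12:ℝ)/ε - 1 < K := Nat.sub_one_lt_floor _
    have h2 : (9:ℝ)/ε ≤ 12/ε - 1 := by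
      rw [div_sub' (ne_of_gt hε), div_le_div_iff₀ hε hε]
      nlinarith
    linarith
  have hK0 : (0:ℝ) < K := lt_of_lt_of_le (by positivity) hK9
  set r : ℝ := 3/(4*K) with hrdef
  have hr0 : 0 < r := by positivity
  have h9 : (9:ℝ) ≤ K * ε := by
    rw [div_le_iff₀ hε] at hK9; linarith
  have h2r : 2*r ≤ ε/6 := by
    rw [hrdef, show (2:ℝ)*(3/(4*(K:ℝ))) = 6/(4*K) from by ring,
      div_le_div_iff₀ (by positivity) (by norm_num)]
    nlinarith
  set t : ℝ := 2 * (2:ℝ)^(-(M:ℤ)) with htdef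
  have ht0 : 0 < t := by positivity
  have ht2 : t ≤ 2 := by
    have : (2:ℝ)^(-(M:ℤ)) ≤ 1 := by
      apply zpow_le_one_of_nonpos₀ (by norm_num)
      omega
    linarith
  have htε : t ≤ ε/2 := by
    have h4ε : (1:ℝ) < 4/ε := by rw [lt_div_iff₀ hε]; linarith
    have hlog : Real.logb 2 (4/ε) ≤ (M:ℝ) := Nat.le_ceil _
    have hpow : (4:ℝ)/ε ≤ (2:ℝ)^(M:ℕ) := by
      calc (4:ℝ)/ε = (2:ℝ) ^ (Real.logb 2 (4/ε)) :=
            (Real.rpow_logb (by norm_num) (by norm_num) (by positivity)).symm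
        _ ≤ (2:ℝ) ^ ((M:ℕ):ℝ) := by
            apply Real.rpow_le_rpow_of_exponent_le (by norm_num) hlog
        _ = (2:ℝ)^(M:ℕ) := Real.rpow_natCast 2 M
    have hzpow : (2:ℝ)^(-(M:ℤ)) = ((2:ℝ)^(M:ℕ))⁻¹ := by
      rw [zpow_neg, zpow_natCast]
    have hp0 : (0:ℝ) < (2:ℝ)^(M:ℕ) := by positivity
    have hpow' : (4:ℝ) ≤ (2:ℝ)^(M:ℕ) * ε := (div_le_iff₀ hε).1 hpow
    rw [htdef, hzpow, inv_eq_one_div, mul_one_div, div_le_div_iff₀ hp0 (by norm_num)]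
    nlinarith
  -- the cover
  set U : (Fin L → Fin (K+1)) → Set Cube := fun c =>
    {x : Cube | ∀ j : Fin L, |(x ((j:ℤ) - M) : ℝ) - (c j : ℕ)/K| < r} with hUdef
  have hopen : ∀ c, IsOpen (U c) := by
    intro c
    have : U c = ⋂ j : Fin L,
        (fun x : Cube => (x ((j:ℤ) - M) : ℝ)) ⁻¹' Metric.ball ((c j : ℕ)/(K:ℝ)) r := by
      ext x
      simp [hUdef, Metric.mem_ball, Real.dist_eq]
    rw [this]
    exact isOpen_iInter_of_finite fun j =>
      (Metric.isOpen_ball).preimage (continuous_subtype_val.comp (continuous_apply _))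
  have hcov : ∀ x : Cube, ∃ c, x ∈ U c := by
    intro x
    have hcle : ∀ a : ℤ, ⌊(x a : ℝ) * K + 1/2⌋₊ < K + 1 := by
      intro a
      have hx1 : (x a : ℝ) ≤ 1 := (x a).2.2
      have hx0 : (0:ℝ) ≤ (x a : ℝ) := (x a).2.1
      have hlt : (x a : ℝ) * K + 1/2 < ((K+1 : ℕ) : ℝ) := by push_cast; nlinarith
      exact (Nat.floor_lt (by positivity)).2 hlt
    refine ⟨fun j => ⟨⌊(x ((j:ℤ) - M) : ℝ) * K + 1/2⌋₊, hcle _⟩, ?_⟩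
    intro j
    set a : ℤ := (j:ℤ) - M
    set w : ℝ := (x a : ℝ)
    have hw0 : (0:ℝ) ≤ w := (x a).2.1
    set c : ℕ := ⌊w * K + 1/2⌋₊ with hcdef
    have h1 : (c:ℝ) ≤ w * K + 1/2 := Nat.floor_le (by positivity)
    have h2 : w * K + 1/2 < c + 1 := Nat.lt_floor_add_one _
    show |w - (c:ℝ)/K| < r
    have heq : w - (c:ℝ)/K = (w*K - c)/K := by field_simp
    have hb : |w*(K:ℝ) - (c:ℝ)| ≤ 1/2 := by
      rw [abs_le]; constructor <;> linarith
    rw [heq, abs_div, abs_of_pos hK0, hrdef, div_lt_div_iff₀ hK0 (by positivity)]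
    nlinarith
  have hdiam : ∀ c, ∀ x ∈ U c, ∀ y ∈ U c, dnCube n x y < ε := by
    intro c x hx y hy
    -- coordinate bound
    have hco : ∀ a : ℤ, -(M:ℤ) ≤ a → a ≤ (n:ℤ) + M → |(x a : ℝ) - (y a : ℝ)| ≤ 2*r := by
      intro a ha1 ha2
      have hjlt : (a + M).toNat < L := by omega
      have hja : ((⟨(a + M).toNat, hjlt⟩ : Fin L) : ℤ) - M = a := by
        simp only []
        omega
      have h1 := hx ⟨(a + M).toNat, hjlt⟩
      have h2 := hy ⟨(a + M).toNat, hjlt⟩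
      rw [hja] at h1 h2
      calc |(x a : ℝ) - (y a : ℝ)|
          ≤ |(x a : ℝ) - ((c ⟨(a + M).toNat, hjlt⟩ : ℕ):ℝ)/K|
            + |((c ⟨(a + M).toNat, hjlt⟩ : ℕ):ℝ)/K - (y a : ℝ)| := abs_sub_le _ _ _
        _ ≤ r + r := by
            rw [abs_sub_comm (((c ⟨(a + M).toNat, hjlt⟩ : ℕ):ℝ)/K)]
            exact add_le_add h1.le h2.le
        _ = 2*r := by ring
    apply dnCube_lt hε
    intro k hk
    rw [dCube_shift]
    set f : ℤ → ℝ := fun m => (2:ℝ) ^ (-|m|) * |(x (m+k) : ℝ) - (y (m+k) : ℝ)| with hfdef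
    have hfs : Summable f := by
      apply Summable.of_nonneg_of_le (fun m => by positivity) _ summable_kernel
      intro m
      calc f m ≤ (2:ℝ)^(-|m|) * 1 := by
            apply mul_le_mul_of_nonneg_left (coord_diff_le_one _ _ _) (by positivity)
        _ = (2:ℝ)^(-|m|) := mul_one _
    set W : Finset ℤ := Finset.Icc (-(M:ℤ)) M with hWdef
    have hsplit := Summable.sum_add_tsum_compl (s := W) hfs
    have hWbound : ∑ m ∈ W, f m ≤ 2*r * (3 - t) := by
      calc ∑ m ∈ W, f m ≤ ∑ m ∈ W, (2:ℝ)^(-|m|) * (2*r) := by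
            apply Finset.sum_le_sum
            intro m hm
            simp only [hWdef, Finset.mem_Icc] at hm
            apply mul_le_mul_of_nonneg_left _ (by positivity)
            apply hco
            · omega
            · omega
        _ = (∑ m ∈ W, (2:ℝ)^(-|m|)) * (2*r) := (Finset.sum_mul _ _ _).symm
        _ = 2*r * (3 - t) := by rw [hWdef, window_sum]; ring
    have hTail : ∑' m : ↑((W : Set ℤ))ᶜ, f m ≤ t := by
      calc ∑' m : ↑((W : Set ℤ))ᶜ, f m
          ≤ ∑' m : ↑((W : Set ℤ))ᶜ, (2:ℝ)^(-|(m:ℤ)|) := by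
            apply Summable.tsum_le_tsum _ (hfs.subtype _) (summable_kernel.subtype _)
            intro m
            calc f m ≤ (2:ℝ)^(-|(m:ℤ)|) * 1 := by
                  apply mul_le_mul_of_nonneg_left (coord_diff_le_one _ _ _) (by positivity)
              _ = (2:ℝ)^(-|(m:ℤ)|) := mul_one _
        _ = t := tail_kernel M
    have htot : ∑' m, f m ≤ 2*r*(3-t) + t := by
      rw [← hsplit]
      exact add_le_add hWbound hTail
    have : 2*r*(3-t) + t < ε := by nlinarith
    linarith
  -- conclude
  have hcard : Fintype.card (Fin L → Fin (K+1)) = (1+K)^L := by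
    simp [Fintype.card_fun, Nat.add_comm]
  let e := Fintype.equivFinOfCardEq hcard
  refine ⟨fun i => U (e.symm i), fun i => hopen _, ?_, fun i => hdiam _⟩
  intro x
  obtain ⟨c, hc⟩ := hcov x
  exact ⟨e c, by simpa using hc⟩

lemma coverNum_upper (ε : ℝ) (hε : 0 < ε) (hε1 : ε < 1) (n : ℕ) :
    coverNum Cube (dnCube n) ε ≤ (1 + ⌊12/ε⌋₊) ^ (n + 2 * ⌈Real.logb 2 (4/ε)⌉₊ + 1) :=
  Nat.sInf_le (cover_mem ε hε hε1 n)

lemma coverNum_lower (ε : ℝ) (hε : 0 < ε) (hε1 : ε < 1) (n : ℕ) :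
    (1 + ⌊1/ε⌋₊) ^ n ≤ coverNum Cube (dnCube n) ε := by
  have hne : {N : ℕ | ∃ U : Fin N → Set Cube, (∀ i, IsOpen (U i)) ∧ (∀ x, ∃ i, x ∈ U i) ∧
      ∀ i, ∀ x ∈ U i, ∀ y ∈ U i, dnCube n x y < ε}.Nonempty :=
    ⟨_, cover_mem ε hε hε1 n⟩
  exact coverNum_mem_lower ε hε hε1 n _ (Nat.sInf_mem hne)

lemma limsup_bounds (ε : ℝ) (hε : 0 < ε) (hε1 : ε < 1) :
    Real.log ((1 + ⌊1/ε⌋₊ : ℕ) : ℝ)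
        ≤ Filter.atTop.limsup (fun n : ℕ => Real.log (coverNum Cube (dnCube n) ε) / n) ∧
      Filter.atTop.limsup (fun n : ℕ => Real.log (coverNum Cube (dnCube n) ε) / n)
        ≤ Real.log ((1 + ⌊12/ε⌋₊ : ℕ) : ℝ) := by
  set a : ℕ → ℝ := fun n => Real.log (coverNum Cube (dnCube n) ε) / n with hadef
  set K₁ : ℕ := 1 + ⌊1/ε⌋₊ with hK1
  set K₂ : ℕ := 1 + ⌊12/ε⌋₊ with hK2
  set C : ℕ := 2 * ⌈Real.logb 2 (4/ε)⌉₊ + 1 with hC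
  set A : ℝ := Real.log K₁ with hA
  set B : ℝ := Real.log K₂ with hB
  have hK1ge : 2 ≤ K₁ := by
    have : 1 ≤ ⌊1/ε⌋₊ := by
      apply Nat.le_floor
      rw [le_div_iff₀ hε]; norm_num; linarith
    omega
  have hK2ge : 2 ≤ K₂ := by
    have : 1 ≤ ⌊12/ε⌋₊ := by
      apply Nat.le_floor
      rw [le_div_iff₀ hε]; norm_num; linarith
    omega
  have hA0 : 0 < A := by
    rw [hA]
    apply Real.log_pos
    exact_mod_cast hK1ge
  have hB0 : 0 < B := by
    rw [hB]
    apply Real.log_pos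
    exact_mod_cast hK2ge
  have hcpos : ∀ n : ℕ, 0 < coverNum Cube (dnCube n) ε := by
    intro n
    calc 0 < K₁ ^ n := pow_pos (by omega) n
      _ ≤ _ := coverNum_lower ε hε hε1 n
  have h1 : ∀ n : ℕ, 1 ≤ n → A ≤ a n := by
    intro n hn
    have hlog : (n:ℝ) * A ≤ Real.log (coverNum Cube (dnCube n) ε) := by
      have hle : ((K₁ ^ n : ℕ) : ℝ) ≤ (coverNum Cube (dnCube n) ε : ℝ) := by
        exact_mod_cast coverNum_lower ε hε hε1 n
      have := Real.log_le_log (by positivity) hle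
      rwa [Nat.cast_pow, Real.log_pow] at this
    rw [hadef, le_div_iff₀ (by exact_mod_cast hn : (0:ℝ) < (n:ℝ))]
    linarith
  have h2 : ∀ n : ℕ, 1 ≤ n → a n ≤ ((n:ℝ) + C) / n * B := by
    intro n hn
    have hn0 : (0:ℝ) < (n:ℝ) := by exact_mod_cast hn
    have hlog : Real.log (coverNum Cube (dnCube n) ε) ≤ ((n:ℝ) + C) * B := by
      have hle : ((coverNum Cube (dnCube n) ε : ℕ) : ℝ) ≤ ((K₂ ^ (n + C) : ℕ) : ℝ) := by
        exact_mod_cast coverNum_upper ε hε hε1 n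
      have := Real.log_le_log (by exact_mod_cast hcpos n) hle
      rwa [Nat.cast_pow, Real.log_pow, Nat.cast_add] at this
    rw [hadef, div_le_iff₀ hn0]
    calc Real.log (coverNum Cube (dnCube n) ε) ≤ ((n:ℝ) + C) * B := hlog
      _ = ((n:ℝ) + C) / n * B * n := by field_simp
  have h3 : ∀ n : ℕ, 1 ≤ n → a n ≤ (1 + C) * B := by
    intro n hn
    have hn0 : (0:ℝ) < (n:ℝ) := by exact_mod_cast hn
    refine (h2 n hn).trans ?_
    apply mul_le_mul_of_nonneg_right _ hB0.le
    rw [div_le_iff₀ hn0]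
    have hn1 : (1:ℝ) ≤ (n:ℝ) := by exact_mod_cast hn
    nlinarith [Nat.cast_nonneg (α := ℝ) C]
  have hev1 : ∀ᶠ n : ℕ in atTop, 1 ≤ n := eventually_ge_atTop 1
  have hbdd : IsBoundedUnder (· ≤ ·) atTop a :=
    isBoundedUnder_of_eventually_le (a := (1 + C) * B) (hev1.mono h3)
  have hcob : IsCoboundedUnder (· ≤ ·) atTop a :=
    (isBoundedUnder_of_eventually_ge (a := A) (hev1.mono h1)).isCoboundedUnder_le
  constructor
  · exact le_limsup_of_frequently_le ((hev1.mono h1).frequently) hbdd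
  · set b : ℕ → ℝ := fun n => ((n:ℝ) + C) / n * B with hbdef
    have hbt : Tendsto b atTop (𝓝 B) := by
      have h0 : Tendsto (fun n : ℕ => (C:ℝ) / n) atTop (𝓝 0) :=
        tendsto_const_div_atTop_nhds_zero_nat _
      have heq : ∀ᶠ n : ℕ in atTop, (1 + (C:ℝ)/n) * B = b n := by
        filter_upwards [eventually_ge_atTop 1] with n hn
        have hn0 : (0:ℝ) < (n:ℝ) := by exact_mod_cast hn
        rw [hbdef]
        field_simp
      have : Tendsto (fun n : ℕ => (1 + (C:ℝ)/n) * B) atTop (𝓝 ((1 + 0) * B)) :=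
        (tendsto_const_nhds.add h0).mul tendsto_const_nhds
      rw [show (1 + (0:ℝ)) * B = B by ring] at this
      exact Tendsto.congr' heq this
    have hlim : Filter.atTop.limsup b = B := hbt.limsup_eq
    calc Filter.atTop.limsup a ≤ Filter.atTop.limsup b :=
        limsup_le_limsup (hev1.mono h2) hcob (hbt.isBoundedUnder_le)
      _ = B := hlim


/-- For the shift on `([0,1]^ℤ, d)`, for every `0 < ε < 1` and `n ≥ 1`,
`(1 + ⌊1/ε⌋)^n ≤ #(𝒳, d_n, ε) ≤ (1 + ⌊12/ε⌋)^{n + 2⌈log₂(4/ε)⌉ + 1}`; consequently the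
metric mean dimension `lim_{ε→0} S(𝒳,σ,d,ε)/|log ε|` equals `1`. -/
theorem cube_metric_mean_dimension :
    (∀ ε : ℝ, 0 < ε → ε < 1 → ∀ n : ℕ, 1 ≤ n →
      (1 + ⌊1 / ε⌋₊) ^ n ≤ coverNum Cube (dnCube n) ε ∧
      coverNum Cube (dnCube n) ε
        ≤ (1 + ⌊12 / ε⌋₊) ^ (n + 2 * ⌈Real.logb 2 (4 / ε)⌉₊ + 1)) ∧
    Tendsto
      (fun ε : ℝ =>
        (Filter.atTop.limsup fun n : ℕ => Real.log (coverNum Cube (dnCube n) ε) / n)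
          / |Real.log ε|)
      (𝓝[>] (0 : ℝ)) (𝓝 1) := by
  constructor
  · intro ε hε hε1 n hn
    exact ⟨coverNum_lower ε hε hε1 n, coverNum_upper ε hε hε1 n⟩
  · set F : ℝ → ℝ := fun ε =>
      (Filter.atTop.limsup fun n : ℕ => Real.log (coverNum Cube (dnCube n) ε) / n)
        / |Real.log ε| with hFdef
    have habs : Tendsto (fun ε : ℝ => |Real.log ε|) (𝓝[>] (0:ℝ)) atTop :=
      tendsto_abs_atBot_atTop.comp Real.tendsto_log_nhdsGT_zero
    set g : ℝ → ℝ := fun ε => 1 + Real.log 13 / |Real.log ε| with hgdef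
    have hg : Tendsto g (𝓝[>] (0:ℝ)) (𝓝 1) := by
      have h0 : Tendsto (fun ε : ℝ => Real.log 13 / |Real.log ε|) (𝓝[>] (0:ℝ)) (𝓝 0) :=
        Tendsto.div_atTop tendsto_const_nhds habs
      have := tendsto_const_nhds (x := (1:ℝ)) (f := 𝓝[>] (0:ℝ)) |>.add h0
      rwa [add_zero] at this
    have hIoo : Set.Ioo (0:ℝ) 1 ∈ 𝓝[>] (0:ℝ) :=
      Ioo_mem_nhdsGT_of_mem ⟨le_refl 0, zero_lt_one⟩
    have hlogpos : ∀ ε : ℝ, ε ∈ Set.Ioo (0:ℝ) 1 → 0 < |Real.log ε| := by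
      intro ε hmem
      rw [abs_pos]
      exact ne_of_lt (Real.log_neg hmem.1 hmem.2)
    have hlower : ∀ᶠ ε : ℝ in 𝓝[>] (0:ℝ), 1 ≤ F ε := by
      filter_upwards [hIoo] with ε hmem
      obtain ⟨hε, hε1⟩ := hmem
      have hl := (limsup_bounds ε hε hε1).1
      have hK1 : 1/ε ≤ ((1 + ⌊1/ε⌋₊ : ℕ) : ℝ) := by
        push_cast
        have := Nat.lt_floor_add_one (1/ε)
        linarith
      have hA : |Real.log ε| ≤ Real.log ((1 + ⌊1/ε⌋₊ : ℕ) : ℝ) := by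
        have h1 : Real.log (1/ε) ≤ Real.log ((1 + ⌊1/ε⌋₊ : ℕ) : ℝ) :=
          Real.log_le_log (by positivity) hK1
        rw [Real.log_div one_ne_zero (ne_of_gt hε), Real.log_one, zero_sub] at h1
        rw [abs_of_neg (Real.log_neg hε hε1)]
        exact h1
      rw [hFdef, le_div_iff₀ (hlogpos ε ⟨hε, hε1⟩), one_mul]
      exact hA.trans hl
    have hupper : ∀ᶠ ε : ℝ in 𝓝[>] (0:ℝ), F ε ≤ g ε := by
      filter_upwards [hIoo] with ε hmem
      obtain ⟨hε, hε1⟩ := hmem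
      have hu := (limsup_bounds ε hε hε1).2
      have hK2 : ((1 + ⌊12/ε⌋₊ : ℕ) : ℝ) ≤ 13/ε := by
        push_cast
        have h1 : (⌊12/ε⌋₊ : ℝ) ≤ 12/ε := Nat.floor_le (by positivity)
        have h2 : (1:ℝ) ≤ 1/ε := by rw [le_div_iff₀ hε]; linarith
        have : 12/ε + 1/ε = 13/ε := by ring
        linarith
      have hB : Real.log ((1 + ⌊12/ε⌋₊ : ℕ) : ℝ) ≤ Real.log 13 + |Real.log ε| := by
        calc Real.log ((1 + ⌊12/ε⌋₊ : ℕ) : ℝ) ≤ Real.log (13/ε) :=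
              Real.log_le_log (by positivity) hK2
          _ = Real.log 13 - Real.log ε := Real.log_div (by norm_num) (ne_of_gt hε)
          _ = Real.log 13 + |Real.log ε| := by
              rw [abs_of_neg (Real.log_neg hε hε1)]; ring
      rw [hFdef, hgdef, div_le_iff₀ (hlogpos ε ⟨hε, hε1⟩)]
      calc (Filter.atTop.limsup fun n : ℕ => Real.log (coverNum Cube (dnCube n) ε) / n)
          ≤ Real.log 13 + |Real.log ε| := hu.trans hB
        _ = (1 + Real.log 13 / |Real.log ε|) * |Real.log ε| := by
            have h0 := hlogpos ε ⟨hε, hε1⟩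
            field_simp
            ring
    exact tendsto_of_tendsto_of_tendsto_of_le_of_le' tendsto_const_nhds hg hlower hupper
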